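/- The minimum degree of G(V) equals q^{n−1}: every one-dimensional subspace of V has degree exactly q^{n−1} in G(V), and every nontrivial proper subspace of V has degree at least q^{n−1} in G(V). -/

import Mathlib

open Module

private lemma card_lin (K A B : Type*) [Field K] [Fintype K] [AddCommGroup A] [Module K A]
    [AddCommGroup B] [Module K B] [FiniteDimensional K A] [FiniteDimensional K B] :
    Nat.card (A →ₗ[K] B) = Fintype.card K ^ (finrank K A * finrank K B) := by
  have e := (LinearMap.toMatrix (finBasis K A) (finBasis K B)).toEquiv.trans
    Matrix.of.symm
  rw [Nat.card_congr e, Nat.card_eq_fintype_card]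
  simp [Fintype.card_fun, ← pow_mul, mul_comm]

-- equiv between projections onto W and maps H →ₗ W, given IsCompl W H
private lemma proj_equiv (K V : Type*) [Field K] [AddCommGroup V] [Module K V]
    (W H : Submodule K V) (hc : IsCompl W H) :
    Nat.card {f : V →ₗ[K] W // ∀ x : W, f x = x} = Nat.card (H →ₗ[K] W) := by
  refine Nat.card_congr ⟨fun f => (f : V →ₗ[K] W).comp H.subtype,
    fun g => ⟨W.projectionOnto H hc + g.comp (H.projectionOnto W hc.symm), ?_⟩,
    ?_, ?_⟩
  · intro x
    simp [Submodule.linearProjOfIsCompl_apply_left hc,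
      Submodule.linearProjOfIsCompl_apply_right' hc.symm x.2]
  · rintro ⟨f, hf⟩
    ext v
    have hv := Submodule.projection_add_projection_eq_self hc v
    have : f v = f ((W.projectionOnto H hc v : V)
        + (H.projectionOnto W hc.symm v : V)) := by exact (congrArg f hv).symm
    simp only [map_add, hf] at this
    simp [this]
  · intro g
    ext h
    simp [Submodule.linearProjOfIsCompl_apply_right' hc h.2,
      Submodule.linearProjOfIsCompl_apply_left hc.symm]

theorem min_degree_eq (K V : Type*) [Field K] [Fintype K] [AddCommGroup V]
    [Module K V] [FiniteDimensional K V] (n q : ℕ) (hq : Fintype.card K = q)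
    (hn : 2 ≤ n) (hdim : finrank K V = n) :
    (∀ W : Submodule K V, finrank K W = 1 →
      Set.ncard {W' : Submodule K V | W' ≠ ⊥ ∧ W' ≠ ⊤ ∧ W ⊔ W' = ⊤} = q ^ (n - 1)) ∧
    (∀ W : Submodule K V, W ≠ ⊥ → W ≠ ⊤ →
      q ^ (n - 1) ≤ Set.ncard {W' : Submodule K V | W' ≠ ⊥ ∧ W' ≠ ⊤ ∧ W ⊔ W' = ⊤}) := by
  have hV : Finite V := Module.finite_of_finite K
  have hSub : Finite (Submodule K V) :=
    Finite.of_injective (fun W => (W : Set V)) SetLike.coe_injective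
  have part1 : ∀ W : Submodule K V, finrank K W = 1 →
      Set.ncard {W' : Submodule K V | W' ≠ ⊥ ∧ W' ≠ ⊤ ∧ W ⊔ W' = ⊤} = q ^ (n - 1) := by
    intro W hW
    -- the set equals the set of complements of W
    have hset : {W' : Submodule K V | W' ≠ ⊥ ∧ W' ≠ ⊤ ∧ W ⊔ W' = ⊤}
        = {W' : Submodule K V | IsCompl W W'} := by
      ext W'
      simp only [Set.mem_setOf_eq]
      constructor
      · rintro ⟨_, hW'top, hsup⟩
        refine ⟨?_, codisjoint_iff.2 hsup⟩
        rw [disjoint_iff]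
        by_contra hne
        have hle : W ⊓ W' ≤ W := inf_le_left
        have h1 : 1 ≤ finrank K ↥(W ⊓ W') := by
          rw [Nat.one_le_iff_ne_zero]
          intro h0
          exact hne (Submodule.finrank_eq_zero.mp h0)
        have heq : W ⊓ W' = W :=
          Submodule.eq_of_le_of_finrank_le hle (by omega)
        have : W ≤ W' := heq ▸ inf_le_right
        exact hW'top (by rw [← hsup, sup_eq_right.2 this])
      · intro hc
        refine ⟨?_, ?_, codisjoint_iff.1 hc.codisjoint⟩
        · rintro rfl
          have : W = ⊤ := by simpa using codisjoint_iff.1 hc.codisjoint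
          rw [this, finrank_top, hdim] at hW
          omega
        · rintro rfl
          have : W = ⊥ := by simpa [disjoint_iff] using hc.disjoint
          rw [this, finrank_bot] at hW
          omega
    rw [hset]
    rw [← Nat.card_coe_set_eq]
    have : Nat.card {W' : Submodule K V | IsCompl W W'}
        = Nat.card {W' : Submodule K V // IsCompl W W'} := rfl
    rw [this, Nat.card_congr (W.isComplEquivProj)]
    obtain ⟨H, hH⟩ := W.exists_isCompl
    rw [proj_equiv K V W H hH, card_lin, hq, hW, mul_one]
    congr 1
    have := Submodule.finrank_add_eq_of_isCompl hH
    omega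
  refine ⟨part1, fun W hWbot hWtop => ?_⟩
  obtain ⟨x, hxW, hx0⟩ := Submodule.exists_mem_ne_zero_of_ne_bot hWbot
  set L : Submodule K V := K ∙ x with hL
  have hLrank : finrank K L = 1 := finrank_span_singleton hx0
  have hLW : L ≤ W := (Submodule.span_singleton_le_iff_mem x W).2 hxW
  have hsubset : {W' : Submodule K V | W' ≠ ⊥ ∧ W' ≠ ⊤ ∧ L ⊔ W' = ⊤}
      ⊆ {W' : Submodule K V | W' ≠ ⊥ ∧ W' ≠ ⊤ ∧ W ⊔ W' = ⊤} := by
    rintro W' ⟨h1, h2, h3⟩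
    exact ⟨h1, h2, top_le_iff.1 (h3 ▸ sup_le_sup_right hLW W')⟩
  calc q ^ (n - 1) = Set.ncard {W' : Submodule K V | W' ≠ ⊥ ∧ W' ≠ ⊤ ∧ L ⊔ W' = ⊤} :=
        (part1 L hLrank).symm
    _ ≤ _ := Set.ncard_le_ncard hsubset (Set.toFinite _)
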